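/- Let (X,+) be an Abelian Polish group and let I be a proper σ-ideal on X with Borel base possessing the Weaker Smital Property. Then the following are equivalent: (i) for every family {B_α : α < ω₁} of Borel I-positive subsets of X there exists W ⊆ ω₁ of cardinality ℵ₁ such that ⋂_{α∈W} B_α ≠ ∅; (ii) cov(I) > ω₁, i.e. X is not the union of ℵ₁-many members of I. -/

import Mathlib

open scoped Pointwise

/-- `I` is a σ-ideal: contains singletons, closed under subsets and countable unions. -/
def IsSigmaIdeal {X : Type*} (I : Set (Set X)) : Prop :=
  (∀ x : X, {x} ∈ I) ∧
  (∀ A ∈ I, ∀ B : Set X, B ⊆ A → B ∈ I) ∧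
  (∀ f : ℕ → Set X, (∀ n, f n ∈ I) → (⋃ n, f n) ∈ I)

/-- `I` has a Borel base: every member is contained in a Borel member. -/
def HasBorelBase {X : Type*} [MeasurableSpace X] (I : Set (Set X)) : Prop :=
  ∀ A ∈ I, ∃ B : Set X, MeasurableSet B ∧ A ⊆ B ∧ B ∈ I

/-- The Weaker Smital Property. -/
def WSP {X : Type*} [TopologicalSpace X] [AddCommGroup X] [MeasurableSpace X]
    (I : Set (Set X)) : Prop :=
  ∃ D : Set X, D.Countable ∧ Dense D ∧
    ∀ B : Set X, MeasurableSet B → B ∉ I → (D + B)ᶜ ∈ I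

universe u v

theorem aux_uncountable_intersection_iff_cov_gt_omega1
    {X : Type u} [TopologicalSpace X] [PolishSpace X] [AddCommGroup X]
    [IsTopologicalAddGroup X] [MeasurableSpace X] [BorelSpace X]
    (I : Set (Set X))
    (hI : IsSigmaIdeal I) (hIb : HasBorelBase I) (hproper : Set.univ ∉ I)
    (hwsp : WSP I) :
    (∀ B : (Cardinal.aleph.{v} 1).ord.ToType → Set X,
        (∀ α, MeasurableSet (B α) ∧ B α ∉ I) →
        ∃ W : Set (Cardinal.aleph.{v} 1).ord.ToType,
          Cardinal.mk W = Cardinal.aleph 1 ∧ (⋂ α ∈ W, B α).Nonempty) ↔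
    ¬ (∃ 𝒜 : Set (Set X), 𝒜 ⊆ I ∧ Cardinal.mk 𝒜 ≤ Cardinal.aleph 1 ∧ ⋃₀ 𝒜 = Set.univ) := by
  classical
  obtain ⟨D, hDc, hDd, hD⟩ := hwsp
  -- X is nonempty
  haveI hXne : Nonempty X := by
    by_contra h
    rw [not_nonempty_iff] at h
    have h1 := hD Set.univ MeasurableSet.univ hproper
    have e1 : (D + (Set.univ : Set X))ᶜ = ∅ := Set.eq_empty_of_isEmpty _
    have e2 : (Set.univ : Set X) = ∅ := Set.eq_empty_of_isEmpty _
    rw [e1, ← e2] at h1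
    exact hproper h1
  obtain ⟨x0⟩ := hXne
  have hmem_empty : ∅ ∈ I := hI.2.1 _ (hI.1 x0) ∅ (Set.empty_subset _)
  -- countable unions of members of `I` are in `I`
  have hsU : ∀ s : Set (Set X), s.Countable → s ⊆ I → ⋃₀ s ∈ I := by
    intro s hsc hsI
    rcases s.eq_empty_or_nonempty with rfl | hne
    · simpa using hmem_empty
    · obtain ⟨f, rfl⟩ := hsc.exists_eq_range hne
      rw [Set.sUnion_range]
      exact hI.2.2 f fun k => hsI ⟨k, rfl⟩
  have hTcard : Cardinal.mk (Cardinal.aleph.{v} 1).ord.ToType = Cardinal.aleph.{v} 1 :=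
    Cardinal.mk_ord_toType _
  have key : Cardinal.lift.{u} (Cardinal.aleph.{v} 1)
      = Cardinal.lift.{v} (Cardinal.aleph.{u} 1) := by
    rw [Cardinal.lift_aleph, Cardinal.lift_aleph, Ordinal.lift_one, Ordinal.lift_one]
  constructor
  · -- (i) → (ii)
    intro h
    rintro ⟨𝒜, h𝒜I, h𝒜c, h𝒜u⟩
    have h𝒜ne : 𝒜.Nonempty := by
      rcases 𝒜.eq_empty_or_nonempty with rfl | hne
      · exfalso
        rw [Set.sUnion_empty] at h𝒜u
        have : (x0 : X) ∈ (∅ : Set X) := by rw [h𝒜u]; trivial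
        exact this
      · exact hne
    haveI : Nonempty 𝒜 := h𝒜ne.to_subtype
    have hle : Cardinal.lift.{v} (Cardinal.mk 𝒜)
        ≤ Cardinal.lift.{u} (Cardinal.mk (Cardinal.aleph.{v} 1).ord.ToType) := by
      rw [hTcard, key]
      exact Cardinal.lift_le.mpr h𝒜c
    obtain ⟨f⟩ := Cardinal.lift_mk_le'.mp hle
    set g : (Cardinal.aleph.{v} 1).ord.ToType → 𝒜 := Function.invFun f with hg
    have hgsurj : Function.Surjective g := Function.invFun_surjective f.injective
    choose Bh hBhm hBhsub hBhI using fun A : 𝒜 => hIb A (h𝒜I A.2)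
    have hIio_count : ∀ a : (Cardinal.aleph.{v} 1).ord.ToType, (Set.Iio a).Countable := by
      intro a
      exact (Cardinal.countable_iff_lt_aleph_one _).mpr (Cardinal.mk_Iio_ord_toType a)
    have hIic_count : ∀ a : (Cardinal.aleph.{v} 1).ord.ToType, (Set.Iic a).Countable := by
      intro a
      rw [← Set.Iio_insert]
      exact (hIio_count a).insert a
    set C : (Cardinal.aleph.{v} 1).ord.ToType → Set X :=
      fun a => ⋃ b ∈ Set.Iic a, Bh (g b) with hCdef
    have hCmem : ∀ a, C a ∈ I := by
      intro a
      have hEq : C a = ⋃₀ ((fun b => Bh (g b)) '' Set.Iic a) := by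
        rw [Set.sUnion_image]
      rw [hEq]
      refine hsU _ ((hIic_count a).image _) ?_
      rintro _ ⟨b, _, rfl⟩
      exact hBhI (g b)
    have hCmeas : ∀ a, MeasurableSet (C a) :=
      fun a => MeasurableSet.biUnion (hIic_count a) fun b _ => hBhm (g b)
    obtain ⟨W, hWcard, x, hx⟩ := h (fun a => (C a)ᶜ) (by
      intro a
      refine ⟨(hCmeas a).compl, ?_⟩
      intro hcon
      apply hproper
      have hEq : (Set.univ : Set X) = ⋃₀ {C a, (C a)ᶜ} := by
        rw [Set.sUnion_pair, Set.union_compl_self]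
      rw [hEq]
      refine hsU _ ((Set.countable_singleton _).insert _) ?_
      intro s hs
      rcases hs with rfl | hs
      · exact hCmem a
      · rw [Set.mem_singleton_iff] at hs
        subst hs
        exact hcon)
    -- x avoids every C a for a ∈ W, but the cover catches it
    have hxu : x ∈ ⋃₀ 𝒜 := by rw [h𝒜u]; trivial
    obtain ⟨A, hA𝒜, hxA⟩ := hxu
    obtain ⟨b, hb⟩ := hgsurj ⟨A, hA𝒜⟩
    have hbig : ∃ a ∈ W, b ≤ a := by
      by_contra hcon
      push_neg at hcon
      have hWsub : W ⊆ Set.Iio b := fun a ha => hcon a ha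
      have : Cardinal.mk W < Cardinal.aleph.{v} 1 :=
        lt_of_le_of_lt (Cardinal.mk_le_mk_of_subset hWsub) (Cardinal.mk_Iio_ord_toType b)
      exact absurd hWcard (ne_of_lt this)
    obtain ⟨a, haW, hba⟩ := hbig
    have hxC : x ∈ (C a)ᶜ := Set.mem_iInter₂.mp hx a haW
    apply hxC
    have hxBh : x ∈ Bh (g b) := by
      apply hBhsub (g b)
      rw [hb]
      exact hxA
    exact Set.mem_biUnion hba hxBh
  · -- (ii) → (i)
    intro hcov B hB
    have hN : ∀ a, (D + B a)ᶜ ∈ I := fun a => hD (B a) (hB a).1 (hB a).2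
    have hex : ∃ x : X, ∀ a, x ∈ D + B a := by
      by_contra hcon
      push_neg at hcon
      apply hcov
      refine ⟨Set.range (fun a => (D + B a)ᶜ), ?_, ?_, ?_⟩
      · rintro _ ⟨a, rfl⟩; exact hN a
      · have h1 : Cardinal.lift.{v} (Cardinal.mk (Set.range (fun a => (D + B a)ᶜ)))
            ≤ Cardinal.lift.{u} (Cardinal.mk (Cardinal.aleph.{v} 1).ord.ToType) :=
          Cardinal.mk_range_le_lift
        rw [hTcard, key] at h1
        exact Cardinal.lift_le.mp h1
      · apply Set.eq_univ_of_forall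
        intro x
        obtain ⟨a, ha⟩ := hcon x
        exact ⟨(D + B a)ᶜ, ⟨a, rfl⟩, ha⟩
    obtain ⟨x, hx⟩ := hex
    have hDne : D.Nonempty := hDd.nonempty
    obtain ⟨e, hDe⟩ := hDc.exists_eq_range hDne
    have hsel : ∀ a, ∃ k : ℕ, x - e k ∈ B a := by
      intro a
      have hmem := hx a
      rw [Set.mem_add] at hmem
      obtain ⟨d, hd, b, hb, hdb⟩ := hmem
      rw [hDe] at hd
      obtain ⟨k, hk⟩ := hd
      refine ⟨k, ?_⟩
      have hxd : x - d = b := by rw [← hdb, add_sub_cancel_left]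
      rw [hk, hxd]
      exact hb
    choose n hn using hsel
    have hfib : ∃ m : ℕ, Cardinal.mk (n ⁻¹' {m} : Set (Cardinal.aleph.{v} 1).ord.ToType)
        = Cardinal.aleph.{v} 1 := by
      by_contra hcon
      push_neg at hcon
      have hcnt : ∀ m : ℕ, (n ⁻¹' {m} : Set (Cardinal.aleph.{v} 1).ord.ToType).Countable := by
        intro m
        rw [Cardinal.countable_iff_lt_aleph_one]
        refine lt_of_le_of_ne ?_ (hcon m)
        exact le_of_le_of_eq (Cardinal.mk_set_le _) hTcard
      have huniv : (Set.univ : Set (Cardinal.aleph.{v} 1).ord.ToType) = ⋃ m : ℕ, n ⁻¹' {m} :=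
        (Set.eq_univ_of_forall fun a =>
          Set.mem_iUnion.mpr ⟨n a, Set.mem_preimage.mpr rfl⟩).symm
      have hc : (Set.univ : Set (Cardinal.aleph.{v} 1).ord.ToType).Countable := by
        rw [huniv]; exact Set.countable_iUnion hcnt
      rw [Set.countable_univ_iff] at hc
      have hle0 : Cardinal.mk (Cardinal.aleph.{v} 1).ord.ToType ≤ Cardinal.aleph0 :=
        Cardinal.mk_le_aleph0_iff.mpr hc
      rw [hTcard] at hle0
      exact absurd hle0 (not_le.mpr Cardinal.aleph0_lt_aleph_one)
    obtain ⟨m, hm⟩ := hfib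
    refine ⟨n ⁻¹' {m}, hm, x - e m, Set.mem_iInter₂.mpr ?_⟩
    intro a ha
    have hna : n a = m := ha
    rw [← hna]
    exact hn a

/-- for a proper σ-ideal with Borel base and WSP, the following are equivalent:
(i) every ω₁-indexed family of Borel `I`-positive sets admits an uncountable subfamily with
nonempty intersection; (ii) `cov(I) > ω₁`. -/
theorem uncountable_intersection_iff_cov_gt_omega1
    {X : Type*} [TopologicalSpace X] [PolishSpace X] [AddCommGroup X]
    [IsTopologicalAddGroup X] [MeasurableSpace X] [BorelSpace X]
    (I : Set (Set X))
    (hI : IsSigmaIdeal I) (hIb : HasBorelBase I) (hproper : Set.univ ∉ I)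
    (hwsp : WSP I) :
    (∀ B : (Cardinal.aleph 1).ord.ToType → Set X,
        (∀ α, MeasurableSet (B α) ∧ B α ∉ I) →
        ∃ W : Set (Cardinal.aleph 1).ord.ToType,
          Cardinal.mk W = Cardinal.aleph 1 ∧ (⋂ α ∈ W, B α).Nonempty) ↔
    ¬ (∃ 𝒜 : Set (Set X), 𝒜 ⊆ I ∧ Cardinal.mk 𝒜 ≤ Cardinal.aleph 1 ∧ ⋃₀ 𝒜 = Set.univ) :=
  aux_uncountable_intersection_iff_cov_gt_omega1 I hI hIb hproper hwsp
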